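/- For m = 4 and edge patterns a = (11,00,01,00), b = (10,10,00,10), the expected counts in the p1 model satisfy g_{n,4}(a) / g_{n,4}(b) = e^ρ, provided g_{n,4}(b) > 0; i.e., E[Q_n(a)] = e^ρ E[Q_n(b)] where Q_n(a) = Σ_{i,j,k,ℓ distinct} A^{11}_{ij} A^{00}_{jk} A^{01}_{kℓ} A^{00}_{ℓi} and Q_n(b) = Σ_{i,j,k,ℓ distinct} A^{10}_{ij} A^{10}_{jk} A^{00}_{kℓ} A^{10}_{ℓi}. -/
import Mathlib


open Real Finset

theorem expected_quadrilateral_ratio (n : ℕ) (ρ γ : ℝ) (α β : Fin n → ℝ)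
    (μ ν η : Fin n → ℝ)
    (hμ : ∀ i, μ i = exp (γ / 2 + α i)) (hν : ∀ i, ν i = exp (γ / 2 + β i))
    (hη : ∀ i, η i = μ i * ν i)
    (K : Fin n → Fin n → ℝ)
    (hK : ∀ i j, K i j = (1 + μ i * ν j + μ j * ν i + exp ρ * η i * η j)⁻¹)
    -- expected counts of the two generalized quadrilaterals:
    (ga gb : ℝ)
    (hga : ga = ∑ i : Fin n, ∑ j : Fin n, ∑ k : Fin n, ∑ l : Fin n,
      if i ≠ j ∧ i ≠ k ∧ i ≠ l ∧ j ≠ k ∧ j ≠ l ∧ k ≠ l then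
        (K i j * (exp ρ * η i * η j)) * (K j k * 1) * (K k l * (μ l * ν k)) * (K l i * 1)
      else 0)
    (hgb : gb = ∑ i : Fin n, ∑ j : Fin n, ∑ k : Fin n, ∑ l : Fin n,
      if i ≠ j ∧ i ≠ k ∧ i ≠ l ∧ j ≠ k ∧ j ≠ l ∧ k ≠ l then
        (K i j * (μ i * ν j)) * (K j k * (μ j * ν k)) * (K k l * 1) * (K l i * (μ l * ν i))
      else 0)
    (hpos : 0 < gb) :
    ga / gb = exp ρ ∧ ga = exp ρ * gb := by
  have key : ga = exp ρ * gb := by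
    rw [hga, hgb]
    simp only [Finset.mul_sum]
    refine Finset.sum_congr rfl fun i _ => ?_
    refine Finset.sum_congr rfl fun j _ => ?_
    refine Finset.sum_congr rfl fun k _ => ?_
    refine Finset.sum_congr rfl fun l _ => ?_
    rw [mul_ite, mul_zero]
    split
    · simp only [hη]; ring
    · rfl
  exact ⟨by rw [key]; field_simp, key⟩
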